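/- Let Ξ ⊆ L^0(X;F) be F-decomposable and closed in probability, and suppose Ξ = L^0(Y;F) is the set of selections of a random closed set Y. Then Ξ is convex if and only if Y(ω) is convex for almost all ω, and Ξ is a cone (closed under multiplication by nonnegative scalars) if and only if Y(ω) is a cone for almost all ω. -/

import Mathlib

open scoped Classical
open scoped ENNReal NNReal
open MeasureTheory Set Filter Topology

section SelWrap
variable {Ω X : Type*} [mΩsel : MeasurableSpace Ω] [NormedAddCommGroup X] [NormedSpace ℝ X]
    [CompleteSpace X] [TopologicalSpace.SeparableSpace X] [MeasurableSpace X] [BorelSpace X]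
end SelWrap

lemma depChoice {T : ℕ → Sort*} {R : ∀ k, T k → T (k+1) → Prop} (base : T 0)
    (h : ∀ k (a : T k), ∃ b, R k a b) :
    ∃ f : ∀ k, T k, f 0 = base ∧ ∀ k, R k (f k) (f (k+1)) :=
  ⟨fun k => Nat.rec base (fun k a => (h k a).choose) k, rfl, fun k => (h k _).choose_spec⟩

lemma ennreal_halves_sum (ε : ℝ≥0∞) :
    ∀ k, (∑ i ∈ Finset.range k, ε / 2 ^ (i + 1)) + ε / 2 ^ k = ε := by
  intro k
  induction k with
  | zero => simp
  | succ k ih =>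
    have h2 : ε / 2 ^ (k+1) = ε / 2 ^ k / 2 := by
      rw [pow_succ, div_eq_mul_inv, div_eq_mul_inv, div_eq_mul_inv,
        ENNReal.mul_inv (Or.inl (pow_ne_zero k two_ne_zero)) (Or.inr two_ne_zero),
        mul_assoc]
    rw [Finset.sum_range_succ, add_assoc, h2, ENNReal.add_halves, ih]

theorem analyticSet_nullMeasurableSet {α : Type*} [TopologicalSpace α] [PolishSpace α]
    [MeasurableSpace α] [BorelSpace α] {s : Set α} (hs : MeasureTheory.AnalyticSet s)
    (μ : Measure α) [IsFiniteMeasure μ] : NullMeasurableSet s μ := by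
  letI := TopologicalSpace.upgradeIsCompletelyMetrizable α
  rw [MeasureTheory.AnalyticSet] at hs
  rcases hs with rfl | ⟨f, fcont, rfl⟩
  · exact (MeasurableSet.empty).nullMeasurableSet
  have key : ∀ ε : ℝ≥0∞, ε ≠ 0 → ∃ C : Set α, IsClosed C ∧ C ⊆ range f ∧
      μ (range f) ≤ μ C + ε := by
    intro ε hε
    set T : (ℕ → ℕ) → ℕ → Set (ℕ → ℕ) := fun v k => {x | ∀ i < k, x i ≤ v i} with hT
    have hT0 : ∀ v, T v 0 = univ := by intro v; ext x; simp [hT]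
    set J : ℕ → (ℕ → ℕ) → Prop := fun k v =>
      μ (range f) ≤ μ (f '' T v k) + ∑ i ∈ Finset.range k, ε / 2 ^ (i + 1) with hJ
    have step : ∀ k (a : {v : ℕ → ℕ // J k v}),
        ∃ b : {v : ℕ → ℕ // J (k+1) v}, ∀ i < k, b.1 i = a.1 i := by
      rintro k ⟨v, hv⟩
      have hmono : Monotone (fun m : ℕ => f '' (T v k ∩ {x | x k ≤ m})) := by
        intro m m' hmm'
        exact image_mono (inter_subset_inter_right _ (fun x hx => le_trans hx hmm'))
      have hunion : (⋃ m : ℕ, f '' (T v k ∩ {x | x k ≤ m})) = f '' T v k := by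
        rw [← image_iUnion, ← inter_iUnion]
        have h1 : (⋃ m : ℕ, {x : ℕ → ℕ | x k ≤ m}) = univ := by
          ext x; simp only [mem_iUnion, mem_setOf_eq, mem_univ, iff_true]
          exact ⟨x k, le_rfl⟩
        rw [h1, inter_univ]
      have hsup : μ (f '' T v k) = ⨆ m, μ (f '' (T v k ∩ {x | x k ≤ m})) := by
        rw [← hunion, hmono.measure_iUnion]
      have hδ : (ε / 2 ^ (k+1)) ≠ 0 := by
        simp [ENNReal.div_eq_zero_iff, hε, ENNReal.pow_ne_top (by norm_num : (2:ℝ≥0∞) ≠ ⊤)]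
      obtain ⟨m, hm⟩ : ∃ m, μ (f '' T v k) - ε / 2 ^ (k+1) ≤ μ (f '' (T v k ∩ {x | x k ≤ m})) := by
        rcases eq_or_ne (μ (f '' T v k)) 0 with h0 | h0
        · exact ⟨0, by simp [h0]⟩
        · have hlt : μ (f '' T v k) - ε / 2 ^ (k+1) < μ (f '' T v k) :=
            ENNReal.sub_lt_self (measure_ne_top μ _) h0 hδ
          obtain ⟨m, hm⟩ := lt_iSup_iff.mp (lt_of_lt_of_eq hlt hsup)
          exact ⟨m, hm.le⟩
      refine ⟨⟨Function.update v k m, ?_⟩, ?_⟩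
      · have hTeq : T (Function.update v k m) (k+1) = T v k ∩ {x | x k ≤ m} := by
          ext x
          simp only [hT, mem_setOf_eq, mem_inter_iff, Nat.lt_succ_iff_lt_or_eq]
          constructor
          · intro h
            refine ⟨fun i hi => ?_, ?_⟩
            · have h' := h i (Or.inl hi)
              rwa [Function.update_of_ne hi.ne] at h'
            · have h' := h k (Or.inr rfl)
              rwa [Function.update_self] at h'
          · rintro ⟨h1, h2⟩ i (hi | rfl)
            · rw [Function.update_of_ne hi.ne]; exact h1 i hi
            · rw [Function.update_self]; exact h2
        show μ (range f) ≤ _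
        rw [hTeq, Finset.sum_range_succ]
        calc μ (range f) ≤ μ (f '' T v k) + ∑ i ∈ Finset.range k, ε / 2 ^ (i + 1) := hv
          _ ≤ (μ (f '' (T v k ∩ {x | x k ≤ m})) + ε / 2 ^ (k+1)) +
              ∑ i ∈ Finset.range k, ε / 2 ^ (i + 1) := by
              gcongr
              exact tsub_le_iff_right.mp hm
          _ = μ (f '' (T v k ∩ {x | x k ≤ m})) +
              (∑ i ∈ Finset.range k, ε / 2 ^ (i + 1) + ε / 2 ^ (k+1)) := by ring
      · intro i hi
        exact Function.update_of_ne hi.ne _ _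
    have base : J 0 (fun _ => 0) := by
      show μ (range f) ≤ _
      simp [hT0, image_univ]
    obtain ⟨F, hF0, hFR⟩ := depChoice (T := fun k => {v : ℕ → ℕ // J k v})
      (R := fun k a b => ∀ i < k, b.1 i = a.1 i) ⟨fun _ => 0, base⟩ step
    set g : ℕ → ℕ := fun i => (F (i+1)).1 i with hg
    have hagree : ∀ k i, i < k → (F k).1 i = g i := by
      intro k
      induction k with
      | zero => intro i hi; omega
      | succ k ih =>
        intro i hi
        rcases Nat.lt_succ_iff_lt_or_eq.mp hi with hi | rfl
        · rw [hFR k i hi, ih i hi]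
        · rfl
    have hJg : ∀ k, μ (range f) ≤ μ (f '' T g k) + ε := by
      intro k
      have hTeq : T ((F k).1) k = T g k := by
        ext x
        simp only [hT, mem_setOf_eq]
        exact ⟨fun h i hi => (hagree k i hi) ▸ h i hi,
               fun h i hi => (hagree k i hi).symm ▸ h i hi⟩
      have h2 : μ (range f) ≤ μ (f '' T ((F k).1) k) + ∑ i ∈ Finset.range k, ε / 2 ^ (i + 1) :=
        (F k).2
      rw [hTeq] at h2
      calc μ (range f) ≤ μ (f '' T g k) + ∑ i ∈ Finset.range k, ε / 2 ^ (i + 1) := h2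
        _ ≤ μ (f '' T g k) + ε := by
            gcongr
            calc (∑ i ∈ Finset.range k, ε / 2 ^ (i + 1))
                ≤ _ + ε / 2 ^ k := le_self_add
              _ = ε := ennreal_halves_sum ε k
    set C : Set α := ⋂ k, closure (f '' T g k) with hC
    have hTanti : Antitone (fun k => T g k) := fun k k' hkk' x hx i hi =>
      hx i (lt_of_lt_of_le hi hkk')
    have hclanti : Antitone (fun k => closure (f '' T g k)) := fun k k' h =>
      closure_mono (image_mono (hTanti h))
    have hCcl : IsClosed C := isClosed_iInter fun k => isClosed_closure
    refine ⟨C, hCcl, ?_, ?_⟩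
    · intro y hy
      have hy' : ∀ k, ∃ x, x ∈ T g k ∧ dist (f x) y < (1/2 : ℝ) ^ k := by
        intro k
        have hyc : y ∈ closure (f '' T g k) := mem_iInter.mp hy k
        obtain ⟨b, hb, hbd⟩ := Metric.mem_closure_iff.mp hyc _
          (by positivity : (0:ℝ) < (1/2)^k)
        obtain ⟨x, hx, rfl⟩ := hb
        exact ⟨x, hx, by rwa [dist_comm]⟩
      choose x hxT hxd using hy'
      set M : ℕ → ℕ := fun i => max (g i) ((Finset.range (i+1)).sup fun k => x k i) with hM
      have hxM : ∀ k, x k ∈ Set.pi univ fun i => Set.Iic (M i) := by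
        intro k i _
        simp only [Set.mem_Iic, hM]
        rcases lt_or_ge i k with hik | hik
        · exact le_max_of_le_left (hxT k i hik)
        · exact le_max_of_le_right (Finset.le_sup (f := fun k => x k i) (Finset.mem_range.mpr (by omega)))
      have hK : IsCompact (Set.pi univ fun i => Set.Iic (M i)) :=
        isCompact_univ_pi fun i => (Set.finite_Iic (M i)).isCompact
      obtain ⟨z, hzK, φ, hφ, hzt⟩ := hK.tendsto_subseq hxM
      have hzg : ∀ i, z i ≤ g i := by
        intro i
        have hcoord : Tendsto (fun k => (x (φ k)) i) atTop (𝓝 (z i)) :=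
          (tendsto_pi_nhds.mp hzt) i
        have hev1 : ∀ᶠ k in atTop, (x (φ k)) i = z i := by
          have hmem := hcoord ((isOpen_discrete {z i}).mem_nhds rfl)
          rw [Filter.mem_map] at hmem
          refine Filter.eventually_iff.mpr ?_
          simpa using hmem
        have hev2 : ∀ᶠ k in atTop, i < φ k :=
          eventually_atTop.mpr ⟨i + 1, fun k hk => lt_of_lt_of_le hk (hφ.le_apply)⟩
        obtain ⟨k, h1, h2⟩ := (hev1.and hev2).exists
        rw [← h1]
        exact hxT (φ k) i h2
      have hfz : Tendsto (fun k => f (x (φ k))) atTop (𝓝 (f z)) :=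
        (fcont.tendsto z).comp hzt
      have hfy : Tendsto (fun k => f (x k)) atTop (𝓝 y) := by
        rw [tendsto_iff_dist_tendsto_zero]
        exact squeeze_zero (fun k => dist_nonneg) (fun k => (hxd k).le)
          (tendsto_pow_atTop_nhds_zero_of_lt_one (by norm_num) (by norm_num))
      have : y = f z := tendsto_nhds_unique (hfy.comp hφ.tendsto_atTop) hfz
      exact this ▸ mem_range_self z
    · have hmeasC : μ C = ⨅ k, μ (closure (f '' T g k)) :=
        Directed.measure_iInter
          (fun k => (isClosed_closure.measurableSet).nullMeasurableSet)
          hclanti.directed_ge ⟨0, measure_ne_top μ _⟩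
      calc μ (range f) ≤ ⨅ k, (μ (closure (f '' T g k)) + ε) :=
            le_iInf fun k => (hJg k).trans (by gcongr; exact subset_closure)
        _ = (⨅ k, μ (closure (f '' T g k))) + ε := by
            rw [ENNReal.iInf_add]
        _ = μ C + ε := by rw [hmeasC]
  choose C hCcl hCsub hCle using fun n : ℕ => key ((n:ℝ≥0∞)+1)⁻¹ (by simp)
  set B := ⋃ n, C n with hB
  have hBmeas : MeasurableSet B := MeasurableSet.iUnion fun n => (hCcl n).measurableSet
  have hBsub : B ⊆ range f := iUnion_subset hCsub
  have hle : μ (range f) ≤ μ B := by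
    refine ENNReal.le_of_forall_pos_le_add fun δ hδ _ => ?_
    obtain ⟨n, hn⟩ := ENNReal.exists_inv_nat_lt (by simpa using hδ.ne' : (δ:ℝ≥0∞) ≠ 0)
    calc μ (range f) ≤ μ (C n) + ((n:ℝ≥0∞)+1)⁻¹ := hCle n
      _ ≤ μ B + δ := by
          gcongr
          · exact subset_iUnion C n
          · exact le_trans (ENNReal.inv_le_inv.mpr (by simp)) hn.le
  have h0 : μ (range f \ B) = 0 := by
    have hsplit : μ (range f ∩ B) + μ (range f \ B) = μ (range f) :=
      measure_inter_add_diff (range f) hBmeas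
    rw [inter_eq_self_of_subset_right hBsub] at hsplit
    have : μ B + μ (range f \ B) ≤ μ B + 0 := by
      rw [add_zero, hsplit]; exact hle
    simpa using (ENNReal.add_le_add_iff_left (measure_ne_top μ B)).mp this
  have : range f = B ∪ (range f \ B) := (union_diff_cancel hBsub).symm
  rw [this]
  exact hBmeas.nullMeasurableSet.union (NullMeasurableSet.of_null h0)


section StepA
variable {Ω X : Type*} [mΩ : MeasurableSpace Ω] [mX : MeasurableSpace X]

lemma exists_gen {M : Set (Ω × X)} (hM : MeasurableSet M) :
    ∃ A : ℕ → Set Ω, (∀ n, MeasurableSet (A n)) ∧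
      MeasurableSet[(MeasurableSpace.generateFrom (Set.range A)).prod mX] M := by
  have key : ∀ (𝓜 : MeasurableSpace (Ω × X)), 𝓜 = mΩ.prod mX → ∀ M, MeasurableSet[𝓜] M →
      ∃ A : ℕ → Set Ω, (∀ n, MeasurableSet (A n)) ∧
        MeasurableSet[(MeasurableSpace.generateFrom (Set.range A)).prod mX] M := by
    intro 𝓜 h𝓜 M hM
    set good : Set (Ω × X) → Prop := fun M => ∃ A : ℕ → Set Ω, (∀ n, MeasurableSet (A n)) ∧
        MeasurableSet[(MeasurableSpace.generateFrom (Set.range A)).prod mX] M with hgood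
    set m' : MeasurableSpace (Ω × X) :=
      { MeasurableSet' := good
        measurableSet_empty := ⟨fun _ => ∅, fun _ => MeasurableSet.empty,
          ((MeasurableSpace.generateFrom (Set.range fun _ : ℕ => (∅ : Set Ω))).prod
            mX).measurableSet_empty⟩
        measurableSet_compl := by
          rintro s ⟨A, hA, hs⟩
          exact ⟨A, hA,
            ((MeasurableSpace.generateFrom (Set.range A)).prod mX).measurableSet_compl _ hs⟩
        measurableSet_iUnion := by
          intro f hf
          choose A hA hmem using hf
          have e : ℕ ≃ ℕ × ℕ := (Denumerable.eqv (ℕ × ℕ)).symm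
          refine ⟨fun m => A (e m).1 (e m).2, fun m => hA _ _, ?_⟩
          refine ((MeasurableSpace.generateFrom
            (Set.range fun m => A (e m).1 (e m).2)).prod mX).measurableSet_iUnion _ fun n => ?_
          have hle : (MeasurableSpace.generateFrom (Set.range (A n))).prod mX ≤
              (MeasurableSpace.generateFrom (Set.range fun m => A (e m).1 (e m).2)).prod mX := by
            refine sup_le_sup ?_ le_rfl
            refine MeasurableSpace.comap_mono (MeasurableSpace.generateFrom_le ?_)
            rintro - ⟨k, rfl⟩
            exact MeasurableSpace.measurableSet_generateFrom (show _ ∈ Set.range _ from ⟨e.symm (n, k), by simp⟩)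
          exact MeasurableSpace.le_def.mp hle _ (hmem n) } with hm'
    have hle : 𝓜 ≤ m' := by
      rw [h𝓜]
      refine sup_le ?_ ?_
      · rintro s ⟨B, hB, rfl⟩
        refine ⟨fun _ => B, fun _ => hB, ?_⟩
        have : MeasurableSet[MeasurableSpace.comap (Prod.fst : Ω × X → Ω)
            (MeasurableSpace.generateFrom (Set.range fun _ : ℕ => B))]
            ((Prod.fst : Ω × X → Ω) ⁻¹' B) :=
          by
            rw [MeasurableSpace.measurableSet_comap]
            refine ⟨B, ?_, rfl⟩
            exact MeasurableSpace.measurableSet_generateFrom ⟨0, rfl⟩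
        exact MeasurableSpace.le_def.mp le_sup_left _ this
      · rintro s ⟨B, hB, rfl⟩
        refine ⟨fun _ => ∅, fun _ => MeasurableSet.empty, ?_⟩
        have : MeasurableSet[MeasurableSpace.comap (Prod.snd : Ω × X → X) mX]
            ((Prod.snd : Ω × X → X) ⁻¹' B) :=
          by
            rw [MeasurableSpace.measurableSet_comap]
            exact ⟨B, hB, rfl⟩
        exact MeasurableSpace.le_def.mp le_sup_right _ this
    exact MeasurableSpace.le_def.mp hle M hM
  exact key _ rfl M hM

end StepA

theorem measurableSet_proj {Ω X : Type*} [mΩ : MeasurableSpace Ω] [TopologicalSpace X]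
    [PolishSpace X] [mX : MeasurableSpace X] [BorelSpace X]
    (P : Measure Ω) [IsFiniteMeasure P] (hPc : P.IsComplete)
    {M : Set (Ω × X)} (hM : MeasurableSet M) :
    MeasurableSet {ω | ∃ x, (ω, x) ∈ M} := by
  obtain ⟨A, hA, hMA⟩ := exists_gen hM
  set φ : Ω → (ℕ → Bool) := fun ω n => decide (ω ∈ A n) with hφ
  have hφmeas : Measurable φ := by
    rw [measurable_pi_iff]
    intro n
    refine measurable_to_bool ?_
    have : (fun ω => φ ω n) ⁻¹' {true} = A n := by
      ext ω; simp [hφ]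
    rw [this]; exact hA n
  have hprodle : (MeasurableSpace.generateFrom (Set.range A)).prod mX ≤
      MeasurableSpace.comap (Prod.map φ id) (Prod.instMeasurableSpace) := by
    refine sup_le ?_ ?_
    · have h1 : MeasurableSpace.generateFrom (Set.range A) ≤
          MeasurableSpace.comap φ (MeasurableSpace.pi) := by
        refine MeasurableSpace.generateFrom_le ?_
        rintro - ⟨n, rfl⟩
        refine ⟨(fun y : ℕ → Bool => y n) ⁻¹' {true}, ?_, ?_⟩
        · exact measurable_pi_apply n (measurableSet_singleton true)
        · ext ω; simp [hφ]
      calc MeasurableSpace.comap Prod.fst (MeasurableSpace.generateFrom (Set.range A))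
          ≤ MeasurableSpace.comap Prod.fst (MeasurableSpace.comap φ MeasurableSpace.pi) :=
            MeasurableSpace.comap_mono h1
        _ = MeasurableSpace.comap (Prod.map φ id)
              (MeasurableSpace.comap Prod.fst MeasurableSpace.pi) := by
            rw [MeasurableSpace.comap_comp, MeasurableSpace.comap_comp]; rfl
        _ ≤ MeasurableSpace.comap (Prod.map φ id)
              (MeasurableSpace.comap Prod.fst MeasurableSpace.pi ⊔
               MeasurableSpace.comap Prod.snd mX) :=
            MeasurableSpace.comap_mono le_sup_left
        _ = MeasurableSpace.comap (Prod.map φ id) Prod.instMeasurableSpace := rfl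
    · calc MeasurableSpace.comap Prod.snd mX
          = MeasurableSpace.comap (Prod.map φ id)
              (MeasurableSpace.comap Prod.snd mX) := by
            rw [MeasurableSpace.comap_comp]; rfl
        _ ≤ MeasurableSpace.comap (Prod.map φ id)
              (MeasurableSpace.comap Prod.fst MeasurableSpace.pi ⊔
               MeasurableSpace.comap Prod.snd mX) :=
            MeasurableSpace.comap_mono le_sup_right
        _ = MeasurableSpace.comap (Prod.map φ id) Prod.instMeasurableSpace := rfl
  obtain ⟨M', hM', hMeq⟩ := MeasurableSpace.measurableSet_comap.mp (MeasurableSpace.le_def.mp hprodle M hMA)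
  have hAnalytic : MeasureTheory.AnalyticSet (Prod.fst '' M') :=
    MeasurableSet.analyticSet_image hM' measurable_fst
  have hNM : NullMeasurableSet (Prod.fst '' M') (P.map φ) :=
    haveI : TopologicalSpace.IsCompletelyMetrizableSpace (ℕ → Bool) := inferInstance
    analyticSet_nullMeasurableSet hAnalytic _
  obtain ⟨B, hB, hBae⟩ := hNM
  obtain ⟨h1, h2⟩ := (ae_eq_set.mp hBae)
  have hpre : {ω | ∃ x, (ω, x) ∈ M} = φ ⁻¹' (Prod.fst '' M') := by
    ext ω
    simp only [mem_setOf_eq, mem_preimage, mem_image]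
    constructor
    · rintro ⟨x, hx⟩
      rw [← hMeq] at hx
      exact ⟨(φ ω, x), hx, rfl⟩
    · rintro ⟨⟨c, x⟩, hcx, hc⟩
      refine ⟨x, ?_⟩
      rw [← hMeq]
      show (φ ω, x) ∈ M'
      simp only at hc
      rwa [hc] at hcx
  have hnull : ∀ s : Set (ℕ → Bool), (P.map φ) s = 0 → P (φ ⁻¹' s) = 0 := fun s hs =>
    le_antisymm (le_trans (Measure.le_map_apply hφmeas.aemeasurable s) hs.le) zero_le
  have k1 : MeasurableSet (φ ⁻¹' (Prod.fst '' M' \ B)) := hPc.out _ (hnull _ h1)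
  have k2 : MeasurableSet (φ ⁻¹' (B \ Prod.fst '' M')) := hPc.out _ (hnull _ h2)
  have hsplit : φ ⁻¹' (Prod.fst '' M') =
      (φ ⁻¹' B \ φ ⁻¹' (B \ Prod.fst '' M')) ∪ φ ⁻¹' (Prod.fst '' M' \ B) := by
    ext ω
    simp only [mem_union, mem_diff, mem_preimage]
    tauto
  rw [hpre, hsplit]
  exact ((hφmeas hB).diff k2).union k1


section Sel
variable {Ω X : Type*} [mΩ : MeasurableSpace Ω] [NormedAddCommGroup X] [NormedSpace ℝ X]
    [CompleteSpace X] [TopologicalSpace.SeparableSpace X] [MeasurableSpace X] [BorelSpace X]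

theorem exists_selection (P : Measure Ω) [IsFiniteMeasure P] (hPc : P.IsComplete)
    (G : Ω → Set X) (hGcl : ∀ ω, IsClosed (G ω))
    (hG : MeasurableSet {p : Ω × X | p.2 ∈ G p.1}) :
    ∃ ξ : Ω → X, Measurable ξ ∧ ∀ ω, (G ω).Nonempty → ξ ω ∈ G ω := by
  have hXne : Nonempty X := ⟨0⟩
  set e : ℕ → X := TopologicalSpace.denseSeq X with he
  have hed : DenseRange e := TopologicalSpace.denseRange_denseSeq X
  set A : Set Ω := {ω | (G ω).Nonempty} with hA
  have hAmeas : MeasurableSet A := by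
    have : A = {ω | ∃ x, (ω, x) ∈ {p : Ω × X | p.2 ∈ G p.1}} := by
      ext ω; simp [hA, Set.Nonempty]
    rw [this]
    exact measurableSet_proj P hPc hG
  -- measurable "Effros" sets
  have hE : ∀ (n : ℕ) (r : ℝ), MeasurableSet {ω | ∃ x ∈ G ω, dist x (e n) < r} := by
    intro n r
    have h1 : MeasurableSet {p : Ω × X | p.2 ∈ G p.1 ∧ dist p.2 (e n) < r} := by
      refine hG.inter ?_
      exact measurable_snd (measurableSet_ball (x := e n) (ε := r))
    have : {ω | ∃ x ∈ G ω, dist x (e n) < r} =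
        {ω | ∃ x, (ω, x) ∈ {p : Ω × X | p.2 ∈ G p.1 ∧ dist p.2 (e n) < r}} := by
      ext ω; simp [and_comm]
    rw [this]
    exact measurableSet_proj P hPc h1
  -- recursive construction
  set T : ℕ → Type _ := fun k =>
    {f : Ω → ℕ // (Measurable f ∧ ∀ ω ∈ A, ∃ x ∈ G ω, dist x (e (f ω)) < (1/2 : ℝ)^k) ∧
      ∀ ω ∉ A, f ω = 0} with hT
  have base : ∀ ω ∈ A, ∃ n, ω ∉ A ∨ ∃ x ∈ G ω, dist x (e n) < (1/2 : ℝ)^0 := by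
    intro ω hω
    obtain ⟨x, hx⟩ := hω
    obtain ⟨n, hn⟩ := Metric.denseRange_iff.mp hed x ((1/2 : ℝ)^0) (by norm_num)
    exact ⟨n, Or.inr ⟨x, hx, hn⟩⟩
  have htot0 : ∀ ω, ∃ n, ω ∉ A ∨ ∃ x ∈ G ω, dist x (e n) < (1/2 : ℝ)^0 := by
    intro ω
    by_cases hω : ω ∈ A
    · exact base ω hω
    · exact ⟨0, Or.inl hω⟩
  set f0 : Ω → ℕ := fun ω => Nat.find (htot0 ω) with hf0
  have hf0meas : Measurable f0 := by
    have := Measurable.find (β := ℕ) (mβ := inferInstance) (f := fun (n : ℕ) (_ : Ω) => n)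
      (p := fun n ω => ω ∉ A ∨ ∃ x ∈ G ω, dist x (e n) < (1/2 : ℝ)^0)
      (fun n => measurable_const) (fun n => (hAmeas.compl).union (hE n _)) htot0
    exact this
  have hf0inv : ∀ ω ∈ A, ∃ x ∈ G ω, dist x (e (f0 ω)) < (1/2 : ℝ)^0 := by
    intro ω hω
    rcases Nat.find_spec (htot0 ω) with h | h
    · exact absurd hω h
    · exact h
  have hf0z : ∀ ω ∉ A, f0 ω = 0 := by
    intro ω hω
    exact (Nat.find_eq_zero (htot0 ω)).mpr (Or.inl hω)
  have step : ∀ k (a : T k), ∃ b : T (k+1),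
      ∀ ω ∈ A, dist (e (b.1 ω)) (e (a.1 ω)) < (1/2 : ℝ)^(k+1) + (1/2 : ℝ)^k := by
    rintro k ⟨f, ⟨hfmeas, hfinv⟩, hfz⟩
    have htot : ∀ ω, ∃ n, ω ∉ A ∨
        ((∃ x ∈ G ω, dist x (e n) < (1/2 : ℝ)^(k+1)) ∧
         dist (e n) (e (f ω)) < (1/2 : ℝ)^(k+1) + (1/2 : ℝ)^k) := by
      intro ω
      by_cases hω : ω ∈ A
      · obtain ⟨x, hxG, hxd⟩ := hfinv ω hω
        obtain ⟨n, hn⟩ := Metric.denseRange_iff.mp hed x ((1/2 : ℝ)^(k+1)) (by positivity)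
        refine ⟨n, Or.inr ⟨⟨x, hxG, hn⟩, ?_⟩⟩
        calc dist (e n) (e (f ω)) ≤ dist (e n) x + dist x (e (f ω)) := dist_triangle _ _ _
          _ < (1/2 : ℝ)^(k+1) + (1/2 : ℝ)^k := by
              rw [dist_comm]
              have h2 := hn
              linarith [dist_comm (e n) x ▸ h2]
      · exact ⟨0, Or.inl hω⟩
    refine ⟨⟨fun ω => Nat.find (htot ω), ⟨?_, ?_⟩, fun ω hω => (Nat.find_eq_zero (htot ω)).mpr (Or.inl hω)⟩, ?_⟩
    · refine Measurable.find (β := ℕ) (mβ := inferInstance) (f := fun (n : ℕ) (_ : Ω) => n)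
        (p := fun n ω => ω ∉ A ∨
          ((∃ x ∈ G ω, dist x (e n) < (1/2 : ℝ)^(k+1)) ∧
           dist (e n) (e (f ω)) < (1/2 : ℝ)^(k+1) + (1/2 : ℝ)^k))
        (fun n => measurable_const) (fun n => ?_) htot
      refine (hAmeas.compl).union ((hE n _).inter ?_)
      exact hfmeas (MeasurableSet.of_discrete (s :=
        {m | dist (e n) (e m) < (1/2 : ℝ)^(k+1) + (1/2 : ℝ)^k}))
    · intro ω hω
      rcases Nat.find_spec (htot ω) with h | h
      · exact absurd hω h
      · exact h.1
    · intro ω hω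
      rcases Nat.find_spec (htot ω) with h | h
      · exact absurd hω h
      · exact h.2
  obtain ⟨F, hF0, hFR⟩ := depChoice (T := T)
    (R := fun k a b => ∀ ω ∈ A, dist (e (b.1 ω)) (e (a.1 ω)) < (1/2 : ℝ)^(k+1) + (1/2 : ℝ)^k)
    ⟨f0, ⟨hf0meas, hf0inv⟩, hf0z⟩ step
  set g : ℕ → Ω → X := fun k ω => e ((F k).1 ω) with hg
  have hgmeas : ∀ k, Measurable (g k) := fun k =>
    (measurable_from_top (f := e)).comp (F k).2.1.1
  have hcauchy : ∀ ω, CauchySeq (fun k => g k ω) := by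
    intro ω
    by_cases hω : ω ∈ A
    · refine cauchySeq_of_le_geometric (1/2 : ℝ) 3 (by norm_num) fun k => ?_
      have h1 := hFR k ω hω
      rw [dist_comm]
      refine le_of_lt ?_
      calc dist (g (k+1) ω) (g k ω)
          = dist (e ((F (k+1)).1 ω)) (e ((F k).1 ω)) := rfl
        _ < (1/2 : ℝ)^(k+1) + (1/2 : ℝ)^k := h1
        _ ≤ 3 * (1/2 : ℝ)^k := by
            rw [pow_succ]
            nlinarith [pow_pos (by norm_num : (0:ℝ) < 1/2) k]
    · have hconst : (fun k => g k ω) = fun _ => e 0 := by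
        funext k
        simp only [hg, (F k).2.2 ω hω]
      rw [hconst]
      exact cauchySeq_const (e 0)
  have hlim : ∀ ω, ∃ l, Tendsto (fun k => g k ω) atTop (𝓝 l) := fun ω =>
    cauchySeq_tendsto_of_complete (hcauchy ω)
  set ξ : Ω → X := fun ω => (hlim ω).choose with hξ
  have hξlim : ∀ ω, Tendsto (fun k => g k ω) atTop (𝓝 (ξ ω)) := fun ω => (hlim ω).choose_spec
  have hξmeas : Measurable ξ :=
    measurable_of_tendsto_metrizable hgmeas (tendsto_pi_nhds.mpr hξlim)
  refine ⟨ξ, hξmeas, ?_⟩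
  intro ω hω
  -- there are points of G ω within (1/2)^k of g k ω
  have happrox : ∀ k, ∃ x ∈ G ω, dist x (g k ω) < (1/2 : ℝ)^k := fun k => (F k).2.1.2 ω hω
  choose xk hxkG hxkd using happrox
  have hxk : Tendsto xk atTop (𝓝 (ξ ω)) := by
    rw [tendsto_iff_dist_tendsto_zero]
    have hbound : ∀ k, dist (xk k) (ξ ω) ≤ (1/2 : ℝ)^k + dist (g k ω) (ξ ω) := by
      intro k
      calc dist (xk k) (ξ ω) ≤ dist (xk k) (g k ω) + dist (g k ω) (ξ ω) := dist_triangle _ _ _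
        _ ≤ (1/2 : ℝ)^k + dist (g k ω) (ξ ω) := by
            have := hxkd k
            linarith
    have h0 : Tendsto (fun k => (1/2 : ℝ)^k + dist (g k ω) (ξ ω)) atTop (𝓝 0) := by
      have h1 : Tendsto (fun k => (1/2 : ℝ)^k) atTop (𝓝 0) :=
        tendsto_pow_atTop_nhds_zero_of_lt_one (by norm_num) (by norm_num)
      have h2 : Tendsto (fun k => dist (g k ω) (ξ ω)) atTop (𝓝 0) :=
        (tendsto_iff_dist_tendsto_zero).mp (hξlim ω)
      simpa using h1.add h2
    exact squeeze_zero (fun k => dist_nonneg) hbound h0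
  exact (hGcl ω).mem_of_tendsto hxk (Filter.Eventually.of_forall hxkG)

end Sel

section Main
variable {Ω X : Type*} [mΩ : MeasurableSpace Ω] [NormedAddCommGroup X] [NormedSpace ℝ X]
    [CompleteSpace X] [TopologicalSpace.SeparableSpace X] [MeasurableSpace X] [BorelSpace X]

theorem exists_castaing (P : Measure Ω) [IsFiniteMeasure P] (hPc : P.IsComplete)
    (Y : Ω → Set X) (hYcl : ∀ ω, IsClosed (Y ω))
    (hYmeas : MeasurableSet {p : Ω × X | p.2 ∈ Y p.1}) :
    ∃ c : ℕ × ℕ → Ω → X, (∀ i, Measurable (c i)) ∧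
      (∀ i ω, (Y ω).Nonempty → c i ω ∈ Y ω) ∧
      (∀ ω, ∀ x ∈ Y ω, ∀ ε : ℝ, 0 < ε → ∃ i, dist (c i ω) x < ε) := by
  have hXne : Nonempty X := ⟨0⟩
  set e : ℕ → X := TopologicalSpace.denseSeq X with he
  have hed : DenseRange e := TopologicalSpace.denseRange_denseSeq X
  obtain ⟨ξY, hξYm, hξY⟩ := exists_selection P hPc Y hYcl hYmeas
  set G : ℕ × ℕ → Ω → Set X :=
    fun i ω => Y ω ∩ Metric.closedBall (e i.1) ((1/2 : ℝ)^i.2) with hG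
  have hGcl : ∀ i ω, IsClosed (G i ω) := fun i ω =>
    (hYcl ω).inter Metric.isClosed_closedBall
  have hGgraph : ∀ i, MeasurableSet {p : Ω × X | p.2 ∈ G i p.1} := by
    intro i
    have : {p : Ω × X | p.2 ∈ G i p.1} =
        {p : Ω × X | p.2 ∈ Y p.1} ∩ (Prod.snd ⁻¹' Metric.closedBall (e i.1) ((1/2 : ℝ)^i.2)) := by
      ext p; simp [hG]
    rw [this]
    exact hYmeas.inter (measurable_snd measurableSet_closedBall)
  have hsel : ∀ i, ∃ ζ : Ω → X, Measurable ζ ∧ ∀ ω, (G i ω).Nonempty → ζ ω ∈ G i ω :=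
    fun i => exists_selection P hPc (G i) (hGcl i) (hGgraph i)
  choose ζ hζm hζ using hsel
  set A : ℕ × ℕ → Set Ω := fun i => {ω | (G i ω).Nonempty} with hA
  have hAmeas : ∀ i, MeasurableSet (A i) := by
    intro i
    have : A i = {ω | ∃ x, (ω, x) ∈ {p : Ω × X | p.2 ∈ G i p.1}} := by
      ext ω; simp [hA, Set.Nonempty]
    rw [this]
    exact measurableSet_proj P hPc (hGgraph i)
  refine ⟨fun i ω => if ω ∈ A i then ζ i ω else ξY ω, ?_, ?_, ?_⟩
  · intro i
    exact Measurable.ite (hAmeas i) (hζm i) hξYm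
  · intro i ω hY
    by_cases hω : ω ∈ A i
    · simp only [if_pos hω]
      exact (hζ i ω hω).1
    · simp only [if_neg hω]
      exact hξY ω hY
  · intro ω x hx ε hε
    obtain ⟨k, hk⟩ : ∃ k : ℕ, (1/2 : ℝ)^k < ε/2 := by
      obtain ⟨k, hk⟩ := exists_pow_lt_of_lt_one (by positivity : (0:ℝ) < ε/2) (by norm_num : (1/2 : ℝ) < 1)
      exact ⟨k, hk⟩
    obtain ⟨n, hn⟩ := Metric.denseRange_iff.mp hed x ((1/2 : ℝ)^k) (by positivity)
    have hxG : x ∈ G (n, k) ω := ⟨hx, Metric.mem_closedBall.mpr hn.le⟩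
    have hωA : ω ∈ A (n, k) := ⟨x, hxG⟩
    refine ⟨(n, k), ?_⟩
    simp only [if_pos hωA]
    have hζball := (hζ (n, k) ω hωA).2
    calc dist (ζ (n, k) ω) x ≤ dist (ζ (n, k) ω) (e n) + dist (e n) x := dist_triangle _ _ _
      _ ≤ (1/2 : ℝ)^k + (1/2 : ℝ)^k := by
          refine add_le_add (Metric.mem_closedBall.mp hζball) ?_
          rw [dist_comm]; exact hn.le
      _ < ε := by linarith
end Main

lemma ratSeq (a : ℝ) (ha : 0 ≤ a) : ∃ q : ℕ → ℚ, (∀ m, 0 ≤ q m) ∧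
    Tendsto (fun m => (q m : ℝ)) atTop (𝓝 a) := by
  have h : ∀ m : ℕ, ∃ r : ℚ, a < (r : ℝ) ∧ (r : ℝ) < a + 1/(m+1) := by
    intro m
    refine exists_rat_btwn ?_
    have : (0:ℝ) < 1/(m+1) := by positivity
    linarith
  choose q hq1 hq2 using h
  refine ⟨q, fun m => ?_, ?_⟩
  · have := hq1 m
    exact_mod_cast le_of_lt (lt_of_le_of_lt ha this)
  · refine tendsto_of_tendsto_of_tendsto_of_le_of_le
      (g := fun _ : ℕ => a) (h := fun m : ℕ => a + 1/(m+1))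
      tendsto_const_nhds ?_ (fun m => (hq1 m).le) (fun m => (hq2 m).le)
    have : Tendsto (fun m : ℕ => 1/((m : ℝ)+1)) atTop (𝓝 0) :=
      tendsto_one_div_add_atTop_nhds_zero_nat
    simpa using tendsto_const_nhds.add this

/-- Theorem 2.4, convexity/cone part: a decomposable probability-closed family
Ξ = L⁰(Y;F) is convex (a cone) iff Y is a.s. convex (a.s. a cone). -/
theorem stmt2 {Ω X : Type*} [MeasurableSpace Ω] [NormedAddCommGroup X] [NormedSpace ℝ X]
    [CompleteSpace X] [TopologicalSpace.SeparableSpace X] [MeasurableSpace X] [BorelSpace X]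
    (P : Measure Ω) [IsProbabilityMeasure P] (hPc : P.IsComplete)
    (Ξ : Set (Ω → X)) (hne : Ξ.Nonempty)
    (hdec : ∀ ξ ∈ Ξ, ∀ η ∈ Ξ, ∀ A : Set Ω, MeasurableSet A →
      (fun ω => if ω ∈ A then ξ ω else η ω) ∈ Ξ)
    (hclosed : ∀ γ : Ω → X, Measurable γ →
      (∃ f : ℕ → Ω → X, (∀ n, f n ∈ Ξ) ∧ TendstoInMeasure P f Filter.atTop γ) → γ ∈ Ξ)
    (Y : Ω → Set X) (hYcl : ∀ ω, IsClosed (Y ω))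
    (hYmeas : MeasurableSet {p : Ω × X | p.2 ∈ Y p.1})
    (hΞ : Ξ = {ξ : Ω → X | Measurable ξ ∧ ∀ᵐ ω ∂P, ξ ω ∈ Y ω}) :
    (Convex ℝ Ξ ↔ ∀ᵐ ω ∂P, Convex ℝ (Y ω)) ∧
    ((∀ ξ ∈ Ξ, ∀ c : ℝ, 0 ≤ c → c • ξ ∈ Ξ) ↔
      ∀ᵐ ω ∂P, ∀ x ∈ Y ω, ∀ c : ℝ, 0 ≤ c → c • x ∈ Y ω) := by
  subst hΞ
  obtain ⟨c, hcm, hcY, hcd⟩ := exists_castaing P hPc Y hYcl hYmeas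
  obtain ⟨ξ₀, hξ₀⟩ := hne
  have hYne : ∀ᵐ ω ∂P, (Y ω).Nonempty := hξ₀.2.mono fun ω h => ⟨ξ₀ ω, h⟩
  have hcΞ : ∀ i, c i ∈ {ξ : Ω → X | Measurable ξ ∧ ∀ᵐ ω ∂P, ξ ω ∈ Y ω} :=
    fun i => ⟨hcm i, hYne.mono fun ω h => hcY i ω h⟩
  constructor
  · constructor
    · -- convex Ξ → Y a.e. convex
      intro hconv
      have H1 : ∀ (t : ℚ × ((ℕ × ℕ) × (ℕ × ℕ))), ∀ᵐ ω ∂P, 0 ≤ t.1 → t.1 ≤ 1 →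
          (t.1 : ℝ) • c t.2.1 ω + (1 - (t.1 : ℝ)) • c t.2.2 ω ∈ Y ω := by
        rintro ⟨q, i, j⟩
        by_cases hq : 0 ≤ q ∧ q ≤ 1
        · have hq0 : (0:ℝ) ≤ (q:ℝ) := by exact_mod_cast hq.1
          have hq1 : (0:ℝ) ≤ 1 - (q:ℝ) := by
            have : (q:ℝ) ≤ 1 := by exact_mod_cast hq.2
            linarith
          have hmem := hconv (hcΞ i) (hcΞ j) hq0 hq1 (by ring)
          filter_upwards [hmem.2] with ω h _ _
          simpa using h
        · filter_upwards with ω h1 h2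
          exact absurd ⟨h1, h2⟩ hq
      have H := ae_all_iff.mpr H1
      filter_upwards [H] with ω hω
      intro x hx y hy a b ha hb hab
      have hb' : b = 1 - a := by linarith
      subst hb'
      have ha1 : a ≤ 1 := by linarith
      -- rational approximations
      obtain ⟨q, hq0, hqt⟩ := ratSeq a ha
      set q' : ℕ → ℚ := fun m => min 1 (q m) with hq'
      have hq'0 : ∀ m, 0 ≤ q' m := fun m => le_min zero_le_one (hq0 m)
      have hq'1 : ∀ m, q' m ≤ 1 := fun m => min_le_left _ _
      have hq't : Tendsto (fun m => (q' m : ℝ)) atTop (𝓝 a) := by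
        have : Tendsto (fun m => min 1 ((q m : ℝ))) atTop (𝓝 (min 1 a)) :=
          tendsto_const_nhds.min hqt
        rw [min_eq_right ha1] at this
        convert this using 2 with m
        push_cast [hq']
        rfl
      have hu : ∀ m : ℕ, ∃ i, dist (c i ω) x < 1/(m+1) :=
        fun m => hcd ω x hx _ (by positivity)
      have hv : ∀ m : ℕ, ∃ i, dist (c i ω) y < 1/(m+1) :=
        fun m => hcd ω y hy _ (by positivity)
      choose iu hiu using hu
      choose iv hiv using hv
      have hut : Tendsto (fun m => c (iu m) ω) atTop (𝓝 x) := by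
        rw [tendsto_iff_dist_tendsto_zero]
        refine squeeze_zero (fun m => dist_nonneg) (fun m => (hiu m).le) ?_
        exact tendsto_one_div_add_atTop_nhds_zero_nat
      have hvt : Tendsto (fun m => c (iv m) ω) atTop (𝓝 y) := by
        rw [tendsto_iff_dist_tendsto_zero]
        refine squeeze_zero (fun m => dist_nonneg) (fun m => (hiv m).le) ?_
        exact tendsto_one_div_add_atTop_nhds_zero_nat
      have hmemseq : ∀ m, (q' m : ℝ) • c (iu m) ω + (1 - (q' m : ℝ)) • c (iv m) ω ∈ Y ω :=
        fun m => hω (q' m, iu m, iv m) (hq'0 m) (hq'1 m)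
      have hlimit : Tendsto
          (fun m => (q' m : ℝ) • c (iu m) ω + (1 - (q' m : ℝ)) • c (iv m) ω)
          atTop (𝓝 (a • x + (1 - a) • y)) :=
        (hq't.smul hut).add ((tendsto_const_nhds.sub hq't).smul hvt)
      exact (hYcl ω).mem_of_tendsto hlimit (Eventually.of_forall hmemseq)
    · -- Y a.e. convex → Ξ convex
      intro h
      intro f hf g hg a b ha hb hab
      refine ⟨(hf.1.const_smul a).add (hg.1.const_smul b), ?_⟩
      filter_upwards [hf.2, hg.2, h] with ω h1 h2 hc
      exact hc h1 h2 ha hb hab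
  · constructor
    · -- cone Ξ → Y a.e. cone
      intro hcone
      have H1 : ∀ (t : ℚ × (ℕ × ℕ)), ∀ᵐ ω ∂P, 0 ≤ t.1 →
          (t.1 : ℝ) • c t.2 ω ∈ Y ω := by
        rintro ⟨q, i⟩
        by_cases hq : 0 ≤ q
        · have hq0 : (0:ℝ) ≤ (q:ℝ) := by exact_mod_cast hq
          have hmem := hcone (c i) (hcΞ i) (q:ℝ) hq0
          filter_upwards [hmem.2] with ω h _
          simpa using h
        · filter_upwards with ω h1
          exact absurd h1 hq
      have H := ae_all_iff.mpr H1
      filter_upwards [H] with ω hω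
      intro x hx r hr
      obtain ⟨q, hq0, hqt⟩ := ratSeq r hr
      have hu : ∀ m : ℕ, ∃ i, dist (c i ω) x < 1/(m+1) :=
        fun m => hcd ω x hx _ (by positivity)
      choose iu hiu using hu
      have hut : Tendsto (fun m => c (iu m) ω) atTop (𝓝 x) := by
        rw [tendsto_iff_dist_tendsto_zero]
        refine squeeze_zero (fun m => dist_nonneg) (fun m => (hiu m).le) ?_
        exact tendsto_one_div_add_atTop_nhds_zero_nat
      have hmemseq : ∀ m, (q m : ℝ) • c (iu m) ω ∈ Y ω :=
        fun m => hω (q m, iu m) (hq0 m)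
      have hlimit : Tendsto (fun m => (q m : ℝ) • c (iu m) ω) atTop (𝓝 (r • x)) :=
        hqt.smul hut
      exact (hYcl ω).mem_of_tendsto hlimit (Eventually.of_forall hmemseq)
    · -- Y a.e. cone → Ξ cone
      intro h ξ hξ r hr
      refine ⟨hξ.1.const_smul r, ?_⟩
      filter_upwards [hξ.2, h] with ω h1 hc
      exact hc _ h1 r hr
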